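/- Let n ≥ 1 and k ≥ 1 be integers and let S be a nonempty finite subset of F₂ⁿ with 2·|S| ≤ 2^k. Then the probability, over a uniformly random triple (A, b, y) with A a k×n matrix over F₂ and b, y ∈ F₂^k, that there exists x ∈ S with A·x + b = y, is at least (3/4)·|S|/2^k. Equivalently, the number of triples (A, b, y) for which some x ∈ S satisfies A·x + b = y is at least (3/4)·|S|·2^{kn + k}. -/

import Mathlib

open Finset Matrix

private lemma gs_card_row {n : ℕ} (hn : 1 ≤ n) (v : Fin n → ZMod 2) (hv : v ≠ 0) :
    (Finset.univ.filter (fun a : Fin n → ZMod 2 => a ⬝ᵥ v = 0)).card = 2 ^ (n - 1) := by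
  obtain ⟨j, hj⟩ := Function.ne_iff.mp hv
  have hj' : v j ≠ 0 := by simpa using hj
  set e : Fin n → ZMod 2 := Pi.single j 1 with he
  have hev : e ⬝ᵥ v = 1 := by
    rw [he, single_dotProduct, one_mul]
    revert hj'; generalize v j = c; revert c; decide
  have hcards : (Finset.univ.filter (fun a : Fin n → ZMod 2 => a ⬝ᵥ v = 0)).card
      = (Finset.univ.filter (fun a : Fin n → ZMod 2 => ¬ (a ⬝ᵥ v = 0))).card := by
    apply Finset.card_nbij' (fun a => a + e) (fun a => a + e)
    · intro a ha
      simp only [Finset.mem_coe, Finset.mem_filter, Finset.mem_univ, true_and] at ha ⊢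
      rw [add_dotProduct, ha, hev]
      decide
    · intro a ha
      simp only [Finset.mem_coe, Finset.mem_filter, Finset.mem_univ, true_and] at ha ⊢
      rw [add_dotProduct, hev]
      revert ha; generalize a ⬝ᵥ v = c; revert c; decide
    · intro a _; ext i
      show a i + e i + e i = a i
      generalize a i = p; generalize e i = q; revert p q; decide
    · intro a _; ext i
      show a i + e i + e i = a i
      generalize a i = p; generalize e i = q; revert p q; decide
  have htot := Finset.card_filter_add_card_filter_not
    (s := (Finset.univ : Finset (Fin n → ZMod 2))) (p := fun a => a ⬝ᵥ v = 0)
  rw [Finset.card_univ, Fintype.card_fun, ZMod.card, Fintype.card_fin] at htot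
  have h2n : (2:ℕ) ^ n = 2 ^ (n-1) * 2 := by
    rw [← pow_succ]; congr 1; omega
  omega

private lemma gs_card_mat {n k : ℕ} (hn : 1 ≤ n) (v : Fin n → ZMod 2) (hv : v ≠ 0) :
    (Finset.univ.filter (fun A : Matrix (Fin k) (Fin n) (ZMod 2) => A.mulVec v = 0)).card
      = 2 ^ ((n - 1) * k) := by
  rw [← Fintype.card_subtype]
  have e1 : {A : Matrix (Fin k) (Fin n) (ZMod 2) // A.mulVec v = 0}
      ≃ (Fin k → {a : Fin n → ZMod 2 // a ⬝ᵥ v = 0}) := by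
    refine (Equiv.subtypeEquivRight ?_).trans (Equiv.subtypePiEquivPi (p := fun _ a => a ⬝ᵥ v = 0))
    intro A
    constructor
    · intro h i; exact congrFun h i
    · intro h; funext i; exact h i
  rw [Fintype.card_congr e1, Fintype.card_fun, Fintype.card_subtype, Fintype.card_fin,
    gs_card_row hn v hv, ← pow_mul]

private lemma gs_card_mat_univ (n k : ℕ) :
    Fintype.card (Matrix (Fin k) (Fin n) (ZMod 2)) = 2 ^ (k * n) := by
  show Fintype.card (Fin k → Fin n → ZMod 2) = _
  rw [Fintype.card_fun, Fintype.card_fun, ZMod.card, Fintype.card_fin, Fintype.card_fin,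
    ← pow_mul, mul_comm]

private lemma gs_card_T {n k : ℕ} (x : Fin n → ZMod 2) :
    (Finset.univ.filter
      (fun t : Matrix (Fin k) (Fin n) (ZMod 2) × (Fin k → ZMod 2) × (Fin k → ZMod 2) =>
        t.1.mulVec x + t.2.1 = t.2.2)).card = 2 ^ (k * n + k) := by
  rw [Finset.card_nbij' (fun t => (t.1, t.2.1))
    (fun p : Matrix (Fin k) (Fin n) (ZMod 2) × (Fin k → ZMod 2) =>
      (p.1, p.2, p.1.mulVec x + p.2))
    (t := Finset.univ) (by intro a _; exact Finset.mem_univ _)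
    (by intro p _; simp) ?_ (by intro p _; rfl)]
  · rw [Finset.card_univ, Fintype.card_prod, Fintype.card_fun, ZMod.card, Fintype.card_fin,
      gs_card_mat_univ, pow_add]
  · intro t ht
    simp only [Finset.mem_coe, Finset.mem_filter, Finset.mem_univ, true_and] at ht
    exact Prod.ext rfl (Prod.ext rfl ht)

private lemma gs_card_TT {n k : ℕ} (hn : 1 ≤ n) (x x' : Fin n → ZMod 2) (hne : x ≠ x') :
    (Finset.univ.filter
      (fun t : Matrix (Fin k) (Fin n) (ZMod 2) × (Fin k → ZMod 2) × (Fin k → ZMod 2) =>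
        t.1.mulVec x + t.2.1 = t.2.2 ∧ t.1.mulVec x' + t.2.1 = t.2.2)).card = 2 ^ (k * n) := by
  have hv : x - x' ≠ 0 := sub_ne_zero.2 hne
  rw [Finset.card_nbij' (fun t => (t.1, t.2.1))
    (fun p : Matrix (Fin k) (Fin n) (ZMod 2) × (Fin k → ZMod 2) =>
      (p.1, p.2, p.1.mulVec x + p.2))
    (t := (Finset.univ.filter
        (fun A : Matrix (Fin k) (Fin n) (ZMod 2) => A.mulVec (x - x') = 0)) ×ˢ Finset.univ)
    ?_ ?_ ?_ (by intro p _; rfl)]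
  · rw [Finset.card_product, gs_card_mat hn _ hv, Finset.card_univ, Fintype.card_fun, ZMod.card,
      Fintype.card_fin, ← pow_add]
    congr 1
    obtain ⟨m, rfl⟩ : ∃ m, n = m + 1 := ⟨n - 1, by omega⟩
    simp [Nat.succ_sub_one]
    ring
  · intro t ht
    simp only [Finset.mem_coe, Finset.mem_filter, Finset.mem_univ, true_and] at ht
    simp only [Finset.mem_coe, Finset.mem_product, Finset.mem_filter, Finset.mem_univ, true_and, and_true]
    rw [Matrix.mulVec_sub, sub_eq_zero]
    have := ht.1.trans ht.2.symm
    exact add_right_cancel this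
  · intro p hp
    simp only [Finset.mem_coe, Finset.mem_product, Finset.mem_filter, Finset.mem_univ, true_and, and_true] at hp
    simp only [Finset.mem_coe, Finset.mem_filter, Finset.mem_univ, true_and]
    have : p.1.mulVec x' = p.1.mulVec x := by
      rw [Matrix.mulVec_sub, sub_eq_zero] at hp; exact hp.symm
    rw [this]
  · intro t ht
    simp only [Finset.mem_coe, Finset.mem_filter, Finset.mem_univ, true_and] at ht
    exact Prod.ext rfl (Prod.ext rfl ht.1)

private lemma gs_pair_count {α : Type*} [DecidableEq α] (s : Finset α) (p : α → Prop)
    [DecidablePred p] :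
    ∑ x ∈ s, ∑ x' ∈ s.erase x, (if p x ∧ p x' then (1:ℕ) else 0)
      = (s.filter p).card * ((s.filter p).card - 1) := by
  have h1 : ∀ x, ∑ x' ∈ s.erase x, (if p x ∧ p x' then (1:ℕ) else 0)
      = if p x then ((s.filter p).erase x).card else 0 := by
    intro x
    by_cases hpx : p x
    · simp only [hpx, true_and, if_true]
      rw [← Finset.card_filter, Finset.filter_erase]
    · simp [hpx]
  rw [Finset.sum_congr rfl (fun x _ => h1 x), ← Finset.sum_filter]
  rw [Finset.sum_congr rfl (fun x hx => Finset.card_erase_of_mem hx), Finset.sum_const,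
    smul_eq_mul]

private lemma gs_cast_pred (d : ℕ) : ((d * (d - 1) : ℕ) : ℝ) = (d : ℝ) * ((d : ℝ) - 1) := by
  cases d with
  | zero => simp
  | succ m => push_cast [Nat.succ_sub_one]; ring

/-- **Goldwasser–Sipser lower bound.**
Let `n ≥ 1`, `k ≥ 1`, and let `S` be a nonempty finite subset of `F₂ⁿ` with `2·|S| ≤ 2^k`.
Then the probability, over a uniformly random triple `(A, b, y)` with `A` a `k×n` matrix over
`F₂` and `b, y ∈ F₂^k` (so over `2^(k*n + 2*k)` equally likely triples), that some `x ∈ S`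
satisfies `A·x + b = y`, is at least `(3/4)·|S|/2^k`; equivalently, the number of such triples
is at least `(3/4)·|S|·2^(k*n + k)`. -/
theorem goldwasser_sipser_lower_bound (n k : ℕ) (hn : 1 ≤ n) (hk : 1 ≤ k)
    (S : Finset (Fin n → ZMod 2)) (hS : S.Nonempty) (hsize : 2 * S.card ≤ 2 ^ k) :
    (3 : ℝ) / 4 * (S.card : ℝ) / 2 ^ k ≤
      ((Finset.univ.filter
        (fun t : Matrix (Fin k) (Fin n) (ZMod 2) × (Fin k → ZMod 2) × (Fin k → ZMod 2) =>
          ∃ x ∈ S, t.1.mulVec x + t.2.1 = t.2.2)).card : ℝ) / 2 ^ (k * n + 2 * k) ∧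
    (3 : ℝ) / 4 * (S.card : ℝ) * 2 ^ (k * n + k) ≤
      ((Finset.univ.filter
        (fun t : Matrix (Fin k) (Fin n) (ZMod 2) × (Fin k → ZMod 2) × (Fin k → ZMod 2) =>
          ∃ x ∈ S, t.1.mulVec x + t.2.1 = t.2.2)).card : ℝ) := by
  set P := Matrix (Fin k) (Fin n) (ZMod 2) × (Fin k → ZMod 2) × (Fin k → ZMod 2) with hP
  set U : Finset P := Finset.univ.filter
    (fun t : P => ∃ x ∈ S, t.1.mulVec x + t.2.1 = t.2.2) with hUdef
  set D : P → ℕ := fun t => (S.filter (fun x => t.1.mulVec x + t.2.1 = t.2.2)).card with hDdef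
  -- Step A: total first-moment count
  have hA : ∑ t : P, D t = S.card * 2 ^ (k * n + k) := by
    calc ∑ t : P, D t
        = ∑ t : P, ∑ x ∈ S, (if t.1.mulVec x + t.2.1 = t.2.2 then 1 else 0) :=
          Finset.sum_congr rfl fun t _ => Finset.card_filter _ _
      _ = ∑ x ∈ S, ∑ t : P, (if t.1.mulVec x + t.2.1 = t.2.2 then 1 else 0) := Finset.sum_comm
      _ = ∑ x ∈ S, (Finset.univ.filter (fun t : P => t.1.mulVec x + t.2.1 = t.2.2)).card :=
          Finset.sum_congr rfl fun x _ => (Finset.card_filter _ _).symm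
      _ = ∑ _x ∈ S, 2 ^ (k * n + k) := Finset.sum_congr rfl fun x _ => gs_card_T x
      _ = S.card * 2 ^ (k * n + k) := by rw [Finset.sum_const, smul_eq_mul]
  -- Step B: total second-moment count
  have hB : ∑ t : P, D t * (D t - 1) = S.card * (S.card - 1) * 2 ^ (k * n) := by
    calc ∑ t : P, D t * (D t - 1)
        = ∑ t : P, ∑ x ∈ S, ∑ x' ∈ S.erase x,
            (if (t.1.mulVec x + t.2.1 = t.2.2) ∧ (t.1.mulVec x' + t.2.1 = t.2.2)
              then 1 else 0) :=
          Finset.sum_congr rfl fun t _ => (gs_pair_count S _).symm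
      _ = ∑ x ∈ S, ∑ t : P, ∑ x' ∈ S.erase x,
            (if (t.1.mulVec x + t.2.1 = t.2.2) ∧ (t.1.mulVec x' + t.2.1 = t.2.2)
              then 1 else 0) := Finset.sum_comm
      _ = ∑ x ∈ S, ∑ x' ∈ S.erase x, ∑ t : P,
            (if (t.1.mulVec x + t.2.1 = t.2.2) ∧ (t.1.mulVec x' + t.2.1 = t.2.2)
              then 1 else 0) := Finset.sum_congr rfl fun x _ => Finset.sum_comm
      _ = ∑ x ∈ S, ∑ x' ∈ S.erase x, (2 : ℕ) ^ (k * n) := by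
          refine Finset.sum_congr rfl fun x hx => Finset.sum_congr rfl fun x' hx' => ?_
          rw [← Finset.card_filter]
          exact gs_card_TT hn x x' (Finset.mem_erase.1 hx').1.symm
      _ = ∑ x ∈ S, (S.card - 1) * 2 ^ (k * n) := by
          refine Finset.sum_congr rfl fun x hx => ?_
          rw [Finset.sum_const, smul_eq_mul, Finset.card_erase_of_mem hx]
      _ = S.card * ((S.card - 1) * 2 ^ (k * n)) := by rw [Finset.sum_const, smul_eq_mul]
      _ = S.card * (S.card - 1) * 2 ^ (k * n) := by ring
  -- pointwise Bonferroni bound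
  have hpt : ∀ t : P, (D t : ℝ) - (D t : ℝ) * ((D t : ℝ) - 1) / 2
      ≤ (if t ∈ U then (1 : ℝ) else 0) := by
    intro t
    by_cases ht : t ∈ U
    · have hD1 : 1 ≤ D t := by
        rw [hUdef, Finset.mem_filter] at ht
        obtain ⟨-, x, hx, hxt⟩ := ht
        exact Finset.card_pos.2 ⟨x, Finset.mem_filter.2 ⟨hx, hxt⟩⟩
      rw [if_pos ht]
      rcases (by omega : D t = 1 ∨ 2 ≤ D t) with h | h
      · rw [h]; norm_num
      · have h2 : (2 : ℝ) ≤ (D t : ℝ) := by exact_mod_cast h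
        nlinarith
    · have hD0 : D t = 0 := by
        by_contra h
        obtain ⟨x, hx⟩ := Finset.card_pos.1 (Nat.pos_of_ne_zero h)
        rw [Finset.mem_filter] at hx
        exact ht (by rw [hUdef, Finset.mem_filter]; exact ⟨Finset.mem_univ _, x, hx.1, hx.2⟩)
      rw [if_neg ht, hD0]; norm_num
  -- sum of indicators
  have hUcard : (U.card : ℝ) = ∑ t : P, (if t ∈ U then (1 : ℝ) else 0) := by
    rw [Finset.sum_ite_mem, Finset.univ_inter, Finset.sum_const, nsmul_eq_mul, mul_one]
  -- real versions of the moment sums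
  have hm1 : 1 ≤ S.card := Finset.card_pos.2 hS
  have hAr : ∑ t : P, (D t : ℝ) = (S.card : ℝ) * 2 ^ (k * n + k) := by
    rw [← Nat.cast_sum]
    rw [hA]; push_cast; ring
  have hBr : ∑ t : P, (D t : ℝ) * ((D t : ℝ) - 1)
      = (S.card : ℝ) * ((S.card : ℝ) - 1) * 2 ^ (k * n) := by
    have : ∑ t : P, (D t : ℝ) * ((D t : ℝ) - 1) = ((∑ t : P, D t * (D t - 1) : ℕ) : ℝ) := by
      rw [Nat.cast_sum]
      exact (Finset.sum_congr rfl fun t _ => (gs_cast_pred (D t)).symm)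
    rw [this, hB]
    push_cast [Nat.cast_sub hm1]
    ring
  -- Bonferroni: U.card ≥ ∑ D - (∑ D(D-1))/2
  have hbon : (S.card : ℝ) * 2 ^ (k * n + k)
      - (S.card : ℝ) * ((S.card : ℝ) - 1) * 2 ^ (k * n) / 2 ≤ (U.card : ℝ) := by
    rw [hUcard]
    calc (S.card : ℝ) * 2 ^ (k * n + k)
        - (S.card : ℝ) * ((S.card : ℝ) - 1) * 2 ^ (k * n) / 2
        = ∑ t : P, ((D t : ℝ) - (D t : ℝ) * ((D t : ℝ) - 1) / 2) := by
          rw [Finset.sum_sub_distrib, hAr, ← Finset.sum_div, hBr]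
      _ ≤ ∑ t : P, (if t ∈ U then (1 : ℝ) else 0) := Finset.sum_le_sum fun t _ => hpt t
  -- arithmetic: the main count bound
  have hm1r : (1 : ℝ) ≤ (S.card : ℝ) := by exact_mod_cast hm1
  have hszr : 2 * (S.card : ℝ) ≤ (2 : ℝ) ^ k := by exact_mod_cast hsize
  have hQK : (2 : ℝ) ^ (k * n + k) = 2 ^ (k * n) * 2 ^ k := pow_add 2 (k * n) k
  have hmain : (3 : ℝ) / 4 * (S.card : ℝ) * 2 ^ (k * n + k) ≤ (U.card : ℝ) := by
    refine le_trans ?_ hbon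
    rw [hQK]
    have hQ0 : (0 : ℝ) < 2 ^ (k * n) := by positivity
    nlinarith [mul_nonneg (mul_nonneg (by linarith : (0:ℝ) ≤ (S.card : ℝ)) hQ0.le)
      (by linarith : (0:ℝ) ≤ (2:ℝ) ^ k - 2 * ((S.card : ℝ) - 1))]
  refine ⟨?_, hmain⟩
  have hpow : (2 : ℝ) ^ (k * n + 2 * k) = 2 ^ (k * n + k) * 2 ^ k := by
    rw [← pow_add]; congr 1; omega
  calc (3 : ℝ) / 4 * (S.card : ℝ) / 2 ^ k
      = (3 : ℝ) / 4 * (S.card : ℝ) * 2 ^ (k * n + k) / (2 ^ (k * n + k) * 2 ^ k) := by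
        rw [eq_div_iff (by positivity)]
        field_simp
    _ ≤ (U.card : ℝ) / (2 ^ (k * n + k) * 2 ^ k) := by gcongr
    _ = (U.card : ℝ) / 2 ^ (k * n + 2 * k) := by rw [hpow]
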